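/- arXiv:2605.00069 — 4 statements merged into one kernel-verified Lean document; each statement's English description precedes it below -/
import Mathlib

section
/- Let k ≥ 1, let f : Fin k → ℝ → ℝ, and let L : Fin k → ℝ be such that for every i, f_i(γ) → L_i as γ → 0⁺. Then softmin_γ(f_1(γ), …, f_k(γ)) → min_i L_i as γ → 0⁺ (limits taken along the filter of positive reals tending to 0). -/
/-- The soft minimum: softmin_γ(a) = −γ · log(∑ i, exp(−a i / γ)). -/
noncomputable def softmin {k : ℕ} (γ : ℝ) (a : Fin k → ℝ) : ℝ :=
  -γ * Real.log (∑ i, Real.exp (-a i / γ))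

lemma softmin_le {k : ℕ} (hk : 1 ≤ k) {γ : ℝ} (hγ : 0 < γ) (a : Fin k → ℝ) :
    softmin γ a ≤ Finset.univ.inf' ⟨⟨0, hk⟩, Finset.mem_univ _⟩ a := by
  set ne : (Finset.univ : Finset (Fin k)).Nonempty := ⟨⟨0, hk⟩, Finset.mem_univ _⟩
  set m := Finset.univ.inf' ne a with hm
  obtain ⟨j, _, hj⟩ := Finset.exists_mem_eq_inf' ne a
  have h1 : Real.exp (-m / γ) ≤ ∑ i, Real.exp (-a i / γ) := by
    rw [hm, hj]
    exact Finset.single_le_sum (f := fun i => Real.exp (-a i / γ)) (fun i _ => (Real.exp_pos _).le) (Finset.mem_univ j)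
  have h2 : -m / γ ≤ Real.log (∑ i, Real.exp (-a i / γ)) := by
    calc -m / γ = Real.log (Real.exp (-m / γ)) := (Real.log_exp _).symm
    _ ≤ _ := Real.log_le_log (Real.exp_pos _) h1
  have := mul_le_mul_of_nonneg_left h2 hγ.le
  rw [mul_div_cancel₀ _ hγ.ne'] at this
  unfold softmin
  nlinarith

lemma le_softmin {k : ℕ} (hk : 1 ≤ k) {γ : ℝ} (hγ : 0 < γ) (a : Fin k → ℝ) :
    Finset.univ.inf' ⟨⟨0, hk⟩, Finset.mem_univ _⟩ a - γ * Real.log k ≤ softmin γ a := by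
  set ne : (Finset.univ : Finset (Fin k)).Nonempty := ⟨⟨0, hk⟩, Finset.mem_univ _⟩
  set m := Finset.univ.inf' ne a with hm
  have h1 : ∑ i, Real.exp (-a i / γ) ≤ k * Real.exp (-m / γ) := by
    calc ∑ i, Real.exp (-a i / γ) ≤ ∑ _i : Fin k, Real.exp (-m / γ) := by
          apply Finset.sum_le_sum
          intro i _
          apply Real.exp_le_exp.2
          rw [hm]
          gcongr
          exact Finset.inf'_le _ (Finset.mem_univ i)
      _ = k * Real.exp (-m / γ) := by simp [Finset.sum_const, nsmul_eq_mul]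
  have hkpos : (0 : ℝ) < k := by exact_mod_cast hk
  have h2 : Real.log (∑ i, Real.exp (-a i / γ)) ≤ Real.log k + (-m / γ) := by
    calc Real.log (∑ i, Real.exp (-a i / γ)) ≤ Real.log (k * Real.exp (-m / γ)) := by
          apply Real.log_le_log _ h1
          apply Finset.sum_pos (fun i _ => Real.exp_pos _) ⟨⟨0, hk⟩, Finset.mem_univ _⟩
      _ = Real.log k + (-m / γ) := by rw [Real.log_mul hkpos.ne' (Real.exp_pos _).ne', Real.log_exp]
  have := mul_le_mul_of_nonneg_left h2 hγ.le
  rw [mul_add, mul_div_cancel₀ _ hγ.ne'] at this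
  unfold softmin
  nlinarith

/-- If each entry f_i(γ) → L_i as γ → 0⁺, then softmin_γ(f(γ)) → min_i L_i as γ → 0⁺. -/
theorem softmin_tendsto_min_of_tendsto {k : ℕ} (hk : 1 ≤ k)
    (f : Fin k → ℝ → ℝ) (L : Fin k → ℝ)
    (hf : ∀ i, Filter.Tendsto (f i) (nhdsWithin 0 (Set.Ioi 0)) (nhds (L i))) :
    Filter.Tendsto (fun γ : ℝ => softmin γ (fun i => f i γ)) (nhdsWithin 0 (Set.Ioi 0))
      (nhds (Finset.univ.inf' ⟨⟨0, hk⟩, Finset.mem_univ _⟩ L)) := by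
  set ne : (Finset.univ : Finset (Fin k)).Nonempty := ⟨⟨0, hk⟩, Finset.mem_univ _⟩
  have hmin : Filter.Tendsto (fun γ => Finset.univ.inf' ne (fun i => f i γ))
      (nhdsWithin 0 (Set.Ioi 0)) (nhds (Finset.univ.inf' ne L)) :=
    Filter.Tendsto.finset_inf'_nhds_apply ne (fun i _ => hf i)
  have hγlog : Filter.Tendsto (fun γ : ℝ => γ * Real.log k) (nhdsWithin 0 (Set.Ioi 0))
      (nhds 0) := by
    have : Filter.Tendsto (fun γ : ℝ => γ * Real.log k) (nhds 0) (nhds (0 * Real.log k)) :=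
      (continuous_id.mul continuous_const).tendsto 0
    simpa using this.mono_left nhdsWithin_le_nhds
  have hlow : Filter.Tendsto (fun γ => Finset.univ.inf' ne (fun i => f i γ) - γ * Real.log k)
      (nhdsWithin 0 (Set.Ioi 0)) (nhds (Finset.univ.inf' ne L)) := by
    simpa using hmin.sub hγlog
  apply tendsto_of_tendsto_of_tendsto_of_le_of_le' hlow hmin
  · filter_upwards [self_mem_nhdsWithin] with γ hγ
    exact le_softmin hk hγ _
  · filter_upwards [self_mem_nhdsWithin] with γ hγ
    exact softmin_le hk hγ _
end

section
/- Let γ > 0, ε > 0, and c ∈ ℝ. Set t := trans_{γ,ε}(0, 0, 0; c). Then the Soft-MSM value of the pair of identical length-two series x = y = (0, 0), namely F := softmin_γ(0, 2t, 2t) (the final cost-matrix entry C_{2,2} of the Soft-MSM forward recursion), satisfies F = −γ · log(1 + 2 · exp(−2t/γ)) and F < 0. In particular F_γ(x, x) ≠ 0, so Soft-MSM fails non-negativity and the identity of indiscernibles and is not a metric. -/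
/-- The two-argument soft minimum softmin_γ(a,b) = −γ·log(exp(−a/γ) + exp(−b/γ)). -/
noncomputable def softmin2 (γ a b : ℝ) : ℝ :=
  -γ * Real.log (Real.exp (-a / γ) + Real.exp (-b / γ))

/-- The three-argument soft minimum. -/
noncomputable def softmin3 (γ a b c : ℝ) : ℝ :=
  -γ * Real.log (Real.exp (-a / γ) + Real.exp (-b / γ) + Real.exp (-c / γ))

/-- The smooth between-gate g_ε(x,y,z) = (1/2)(1 − u/√(u² + ε)) with u = (x−y)(x−z). -/
noncomputable def gate (ε x y z : ℝ) : ℝ :=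
  (1 / 2) * (1 - ((x - y) * (x - z)) / Real.sqrt (((x - y) * (x - z)) ^ 2 + ε))

/-- The Soft-MSM transition cost
trans_{γ,ε}(x,y,z;c) = c + (1 − g_ε(x,y,z)) · softmin_γ((x−y)², (x−z)²). -/
noncomputable def softTrans (γ ε x y z c : ℝ) : ℝ :=
  c + (1 - gate ε x y z) * softmin2 γ ((x - y) ^ 2) ((x - z) ^ 2)

/-- For the identical length-two series x = y = (0,0), the Soft-MSM value
F = softmin_γ(0, 2t, 2t) with t = trans_{γ,ε}(0,0,0;c) satisfies
F = −γ·log(1 + 2·exp(−2t/γ)) and F < 0; hence Soft-MSM fails non-negativity and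
the identity of indiscernibles, so it is not a metric. -/
theorem softMSM_self_neg (γ ε c : ℝ) (hγ : 0 < γ) (hε : 0 < ε) :
    softmin3 γ 0 (2 * softTrans γ ε 0 0 0 c) (2 * softTrans γ ε 0 0 0 c) =
        -γ * Real.log (1 + 2 * Real.exp (-(2 * softTrans γ ε 0 0 0 c) / γ)) ∧
      softmin3 γ 0 (2 * softTrans γ ε 0 0 0 c) (2 * softTrans γ ε 0 0 0 c) < 0 := by
  set t := 2 * softTrans γ ε 0 0 0 c
  have h1 : softmin3 γ 0 t t = -γ * Real.log (1 + 2 * Real.exp (-t / γ)) := by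
    unfold softmin3
    rw [neg_zero, zero_div, Real.exp_zero]
    ring_nf
  refine ⟨h1, ?_⟩
  rw [h1]
  have hlog : 0 < Real.log (1 + 2 * Real.exp (-t / γ)) := by
    apply Real.log_pos
    have := Real.exp_pos (-t / γ)
    linarith
  have : 0 < γ * Real.log (1 + 2 * Real.exp (-t / γ)) := mul_pos hγ hlog
  linarith
end

section
/- Let x, y, z ∈ ℝ and c ∈ ℝ, and set u := (x − y)(x − z). Assume u ≠ 0. If u < 0 (x strictly between y and z), then trans_{γ,ε}(x, y, z; c) → c as (γ, ε) → (0⁺, 0⁺); if u > 0, then trans_{γ,ε}(x, y, z; c) → c + min((x − y)², (x − z)²) as (γ, ε) → (0⁺, 0⁺). Here the limit is taken along the product of the filters of positive reals γ and ε tending to 0. -/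
open Filter Real

lemma softmin2_le (γ a b : ℝ) (hγ : 0 < γ) : softmin2 γ a b ≤ min a b := by
  have hE : Real.exp (-(min a b) / γ) ≤ Real.exp (-a / γ) + Real.exp (-b / γ) := by
    rcases le_total a b with h | h
    · rw [min_eq_left h]; nlinarith [Real.exp_pos (-b / γ)]
    · rw [min_eq_right h]; nlinarith [Real.exp_pos (-a / γ)]
  have hlog : -(min a b) / γ ≤ Real.log (Real.exp (-a / γ) + Real.exp (-b / γ)) := by
    have := Real.log_le_log (Real.exp_pos _) hE
    rwa [Real.log_exp] at this
  have : γ * (-(min a b) / γ) = -(min a b) := by field_simp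
  unfold softmin2
  nlinarith [mul_le_mul_of_nonneg_left hlog hγ.le]

lemma softmin2_ge (γ a b : ℝ) (hγ : 0 < γ) :
    min a b - γ * Real.log 2 ≤ softmin2 γ a b := by
  have h1 : Real.exp (-a / γ) ≤ Real.exp (-(min a b) / γ) :=
    Real.exp_le_exp.2 (by gcongr; linarith [min_le_left a b])
  have h2 : Real.exp (-b / γ) ≤ Real.exp (-(min a b) / γ) :=
    Real.exp_le_exp.2 (by gcongr; linarith [min_le_right a b])
  have hE : Real.exp (-a / γ) + Real.exp (-b / γ) ≤ 2 * Real.exp (-(min a b) / γ) := by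
    linarith
  have hpos : (0:ℝ) < Real.exp (-a / γ) + Real.exp (-b / γ) := by positivity
  have hlog : Real.log (Real.exp (-a / γ) + Real.exp (-b / γ))
      ≤ Real.log 2 + -(min a b) / γ := by
    have := Real.log_le_log hpos hE
    rwa [Real.log_mul (by norm_num) (Real.exp_pos _).ne', Real.log_exp] at this
  have hmul : γ * (-(min a b) / γ) = -(min a b) := by field_simp
  unfold softmin2
  nlinarith [mul_le_mul_of_nonneg_left hlog hγ.le]

lemma softmin2_tendsto (a b : ℝ) :
    Tendsto (fun γ => softmin2 γ a b) (nhdsWithin 0 (Set.Ioi 0)) (nhds (min a b)) := by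
  have hlow : Tendsto (fun γ : ℝ => min a b - γ * Real.log 2)
      (nhdsWithin 0 (Set.Ioi 0)) (nhds (min a b)) := by
    have : Tendsto (fun γ : ℝ => min a b - γ * Real.log 2) (nhds 0)
        (nhds (min a b - 0 * Real.log 2)) :=
      tendsto_const_nhds.sub (tendsto_id.mul tendsto_const_nhds)
    simpa using this.mono_left nhdsWithin_le_nhds
  have hhigh : Tendsto (fun _ : ℝ => min a b) (nhdsWithin 0 (Set.Ioi 0)) (nhds (min a b)) :=
    tendsto_const_nhds
  refine tendsto_of_tendsto_of_tendsto_of_le_of_le' hlow hhigh ?_ ?_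
  · filter_upwards [self_mem_nhdsWithin] with γ hγ using softmin2_ge γ a b hγ
  · filter_upwards [self_mem_nhdsWithin] with γ hγ using softmin2_le γ a b hγ

lemma gate_tendsto (x y z : ℝ) (hu : (x - y) * (x - z) ≠ 0) :
    Tendsto (fun ε => gate ε x y z) (nhdsWithin 0 (Set.Ioi 0))
      (nhds ((1 / 2) * (1 - ((x - y) * (x - z)) / |(x - y) * (x - z)|))) := by
  set u := (x - y) * (x - z)
  have hcont : ContinuousAt (fun ε : ℝ => gate ε x y z) 0 := by
    unfold gate
    apply ContinuousAt.mul continuousAt_const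
    apply ContinuousAt.sub continuousAt_const
    apply ContinuousAt.div continuousAt_const
    · exact Real.continuous_sqrt.continuousAt.comp (by fun_prop)
    · simp only [add_zero]
      rw [Real.sqrt_sq_eq_abs]
      exact abs_ne_zero.2 hu
  have h2 := hcont.tendsto.mono_left
    (nhdsWithin_le_nhds : nhdsWithin (0:ℝ) (Set.Ioi 0) ≤ nhds 0)
  simpa [gate, Real.sqrt_sq_eq_abs, u] using h2

/-- Hard-alignment limit of the Soft-MSM transition cost as (γ,ε) → (0⁺,0⁺):
it tends to c when x is strictly between y and z (u < 0), and to
c + min((x−y)², (x−z)²) when u > 0. -/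
theorem softTrans_hard_limit (x y z c : ℝ) (hu : (x - y) * (x - z) ≠ 0) :
    ((x - y) * (x - z) < 0 →
      Filter.Tendsto (fun p : ℝ × ℝ => softTrans p.1 p.2 x y z c)
        ((nhdsWithin 0 (Set.Ioi 0)) ×ˢ (nhdsWithin 0 (Set.Ioi 0))) (nhds c)) ∧
    (0 < (x - y) * (x - z) →
      Filter.Tendsto (fun p : ℝ × ℝ => softTrans p.1 p.2 x y z c)
        ((nhdsWithin 0 (Set.Ioi 0)) ×ˢ (nhdsWithin 0 (Set.Ioi 0)))
        (nhds (c + min ((x - y) ^ 2) ((x - z) ^ 2)))) := by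
  set u := (x - y) * (x - z) with hu_def
  have hgate : Tendsto (fun p : ℝ × ℝ => gate p.2 x y z)
      ((nhdsWithin 0 (Set.Ioi 0)) ×ˢ (nhdsWithin 0 (Set.Ioi 0)))
      (nhds ((1 / 2) * (1 - u / |u|))) :=
    (gate_tendsto x y z hu).comp tendsto_snd
  have hsm : Tendsto (fun p : ℝ × ℝ => softmin2 p.1 ((x - y) ^ 2) ((x - z) ^ 2))
      ((nhdsWithin 0 (Set.Ioi 0)) ×ˢ (nhdsWithin 0 (Set.Ioi 0)))
      (nhds (min ((x - y) ^ 2) ((x - z) ^ 2))) :=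
    (softmin2_tendsto _ _).comp tendsto_fst
  have hmain : Tendsto (fun p : ℝ × ℝ => softTrans p.1 p.2 x y z c)
      ((nhdsWithin 0 (Set.Ioi 0)) ×ˢ (nhdsWithin 0 (Set.Ioi 0)))
      (nhds (c + (1 - (1 / 2) * (1 - u / |u|)) * min ((x - y) ^ 2) ((x - z) ^ 2))) := by
    unfold softTrans
    exact tendsto_const_nhds.add ((tendsto_const_nhds.sub hgate).mul hsm)
  constructor
  · intro h
    have habs : |u| = -u := abs_of_neg h
    have : (1 - (1 / 2) * (1 - u / |u|)) = 0 := by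
      rw [habs]; field_simp; norm_num
    rw [this, zero_mul, add_zero] at hmain
    exact hmain
  · intro h
    have habs : |u| = u := abs_of_pos h
    have : (1 - (1 / 2) * (1 - u / |u|)) = 1 := by
      rw [habs]; field_simp; norm_num
    rw [this, one_mul] at hmain
    exact hmain
end

section
/- Let m ≥ 1, γ > 0, ε > 0, and c ∈ ℝ. The Soft-MSM objective F_γ : (Fin m → ℝ) × (Fin m → ℝ) → ℝ, defined as the final entry C_{m,m} of the Soft-MSM forward recursion, is continuously differentiable (indeed C^∞) with respect to all entries of both input series. -/
/-- The Soft-MSM cost matrix `C`, as a forward recursion over 0-based indices: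
`softMSMCost γ ε c x y i j` is the entry C_{i+1, j+1} (in the paper's 1-based
notation) for the series x, y : ℕ → ℝ (0-indexed). -/
noncomputable def softMSMCost (γ ε c : ℝ) (x y : ℕ → ℝ) : ℕ → ℕ → ℝ
  | 0, 0 => (x 0 - y 0) ^ 2
  | i + 1, 0 => softTrans γ ε (x (i + 1)) (x i) (y 0) c + softMSMCost γ ε c x y i 0
  | 0, j + 1 => softTrans γ ε (y (j + 1)) (y j) (x 0) c + softMSMCost γ ε c x y 0 j
  | i + 1, j + 1 =>
      softmin3 γ
        ((x (i + 1) - y (j + 1)) ^ 2 + softMSMCost γ ε c x y i j)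
        (softTrans γ ε (x (i + 1)) (x i) (y (j + 1)) c + softMSMCost γ ε c x y i (j + 1))
        (softTrans γ ε (y (j + 1)) (y j) (x (i + 1)) c + softMSMCost γ ε c x y (i + 1) j)


section SoftMSMAux
variable {E : Type*} [NormedAddCommGroup E] [NormedSpace ℝ E]

lemma sqrt_smooth' {f : E → ℝ} (hf : ContDiff ℝ (⊤:ℕ∞) f) (h : ∀ p, f p ≠ 0) :
    ContDiff ℝ (⊤:ℕ∞) fun p => Real.sqrt (f p) := by
  rw [contDiff_iff_contDiffAt]
  intro p
  exact (Real.contDiffAt_sqrt (h p)).comp p hf.contDiffAt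

lemma softmin2_smooth (γ : ℝ) {f g : E → ℝ} (hf : ContDiff ℝ (⊤:ℕ∞) f)
    (hg : ContDiff ℝ (⊤:ℕ∞) g) :
    ContDiff ℝ (⊤:ℕ∞) fun p => softmin2 γ (f p) (g p) := by
  unfold softmin2
  have h : ContDiff ℝ (⊤:ℕ∞) fun p => Real.exp (-f p / γ) + Real.exp (-g p / γ) :=
    ((hf.neg.div_const γ).exp).add ((hg.neg.div_const γ).exp)
  exact contDiff_const.mul (h.log fun p => by positivity)

lemma softmin3_smooth (γ : ℝ) {f g h : E → ℝ} (hf : ContDiff ℝ (⊤:ℕ∞) f)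
    (hg : ContDiff ℝ (⊤:ℕ∞) g) (hh : ContDiff ℝ (⊤:ℕ∞) h) :
    ContDiff ℝ (⊤:ℕ∞) fun p => softmin3 γ (f p) (g p) (h p) := by
  unfold softmin3
  have hs : ContDiff ℝ (⊤:ℕ∞) fun p =>
      Real.exp (-f p / γ) + Real.exp (-g p / γ) + Real.exp (-h p / γ) :=
    (((hf.neg.div_const γ).exp).add ((hg.neg.div_const γ).exp)).add ((hh.neg.div_const γ).exp)
  exact contDiff_const.mul (hs.log fun p => by positivity)

lemma gate_smooth {ε : ℝ} (hε : 0 < ε) {f g h : E → ℝ} (hf : ContDiff ℝ (⊤:ℕ∞) f)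
    (hg : ContDiff ℝ (⊤:ℕ∞) g) (hh : ContDiff ℝ (⊤:ℕ∞) h) :
    ContDiff ℝ (⊤:ℕ∞) fun p => gate ε (f p) (g p) (h p) := by
  unfold gate
  have hu : ContDiff ℝ (⊤:ℕ∞) fun p => (f p - g p) * (f p - h p) :=
    (hf.sub hg).mul (hf.sub hh)
  have hden : ContDiff ℝ (⊤:ℕ∞) fun p =>
      Real.sqrt (((f p - g p) * (f p - h p)) ^ 2 + ε) :=
    sqrt_smooth' ((hu.pow 2).add contDiff_const) (fun p => by positivity)
  refine contDiff_const.mul (contDiff_const.sub (hu.div hden fun p => ?_))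
  have : (0:ℝ) < ((f p - g p) * (f p - h p)) ^ 2 + ε := by positivity
  exact ne_of_gt (Real.sqrt_pos.mpr this)

lemma softTrans_smooth (γ : ℝ) {ε : ℝ} (hε : 0 < ε) (c : ℝ) {f g h : E → ℝ}
    (hf : ContDiff ℝ (⊤:ℕ∞) f) (hg : ContDiff ℝ (⊤:ℕ∞) g) (hh : ContDiff ℝ (⊤:ℕ∞) h) :
    ContDiff ℝ (⊤:ℕ∞) fun p => softTrans γ ε (f p) (g p) (h p) c := by
  unfold softTrans
  exact contDiff_const.add
    ((contDiff_const.sub (gate_smooth hε hf hg hh)).mul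
      (softmin2_smooth γ ((hf.sub hg).pow 2) ((hf.sub hh).pow 2)))

lemma softMSMCost_smooth (γ : ℝ) {ε : ℝ} (hε : 0 < ε) (c : ℝ) {x y : E → ℕ → ℝ}
    (hx : ∀ k, ContDiff ℝ (⊤:ℕ∞) fun p => x p k)
    (hy : ∀ k, ContDiff ℝ (⊤:ℕ∞) fun p => y p k) :
    ∀ i j, ContDiff ℝ (⊤:ℕ∞) fun p => softMSMCost γ ε c (x p) (y p) i j := by
  intro i
  induction i with
  | zero =>
    intro j
    induction j with
    | zero =>
      simp only [softMSMCost]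
      exact ((hx 0).sub (hy 0)).pow 2
    | succ j ihj =>
      simp only [softMSMCost]
      exact (softTrans_smooth γ hε c (hy (j+1)) (hy j) (hx 0)).add ihj
  | succ i ih =>
    intro j
    induction j with
    | zero =>
      simp only [softMSMCost]
      exact (softTrans_smooth γ hε c (hx (i+1)) (hx i) (hy 0)).add (ih 0)
    | succ j ihj =>
      simp only [softMSMCost]
      exact softmin3_smooth γ
        ((((hx (i+1)).sub (hy (j+1))).pow 2).add (ih j))
        ((softTrans_smooth γ hε c (hx (i+1)) (hx i) (hy (j+1))).add (ih (j+1)))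
        ((softTrans_smooth γ hε c (hy (j+1)) (hy j) (hx (i+1))).add ihj)

end SoftMSMAux

/-- The Soft-MSM objective F_γ(x,y) = C_{m,m} is C^∞ (in particular C¹) jointly in all
entries of both input series x, y ∈ ℝ^m. -/
theorem softMSM_objective_contDiff (m : ℕ) (hm : 1 ≤ m) (γ ε c : ℝ)
    (hγ : 0 < γ) (hε : 0 < ε) :
    ContDiff ℝ (⊤ : ℕ∞)
        (fun p : (Fin m → ℝ) × (Fin m → ℝ) =>
          softMSMCost γ ε c (fun i => p.1 ⟨i % m, Nat.mod_lt i hm⟩)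
            (fun j => p.2 ⟨j % m, Nat.mod_lt j hm⟩) (m - 1) (m - 1)) ∧
      ContDiff ℝ 1
        (fun p : (Fin m → ℝ) × (Fin m → ℝ) =>
          softMSMCost γ ε c (fun i => p.1 ⟨i % m, Nat.mod_lt i hm⟩)
            (fun j => p.2 ⟨j % m, Nat.mod_lt j hm⟩) (m - 1) (m - 1)) := by
  have hx : ∀ k, ContDiff ℝ (⊤:ℕ∞)
      (fun p : (Fin m → ℝ) × (Fin m → ℝ) => p.1 ⟨k % m, Nat.mod_lt k hm⟩) :=
    fun k => (contDiff_apply ℝ ℝ (⟨k % m, Nat.mod_lt k hm⟩ : Fin m)).comp contDiff_fst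
  have hy : ∀ k, ContDiff ℝ (⊤:ℕ∞)
      (fun p : (Fin m → ℝ) × (Fin m → ℝ) => p.2 ⟨k % m, Nat.mod_lt k hm⟩) :=
    fun k => (contDiff_apply ℝ ℝ (⟨k % m, Nat.mod_lt k hm⟩ : Fin m)).comp contDiff_snd
  have h := softMSMCost_smooth (E := (Fin m → ℝ) × (Fin m → ℝ)) γ hε c hx hy (m-1) (m-1)
  exact ⟨h, h.of_le (by exact_mod_cast le_top)⟩
end
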